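/- For each integer n ≥ 0 there exists a constant Cₙ < ∞ such that |(∂ⁿ/∂xⁿ) Q₁(t,x)| ≤ Cₙ / tⁿ for all x ∈ [0,1) and all t ∈ (0,1). -/

import Mathlib

open Real Filter Set Topology

noncomputable section

/-- `Q₁(t,x) = (arccos x/√(1−x²))·exp(−(arccos x)²/(4t))`, for `x ∈ [0,1)`. -/
def Q1 (t x : ℝ) : ℝ :=
  (Real.arccos x / Real.sqrt (1 - x ^ 2)) * Real.exp (-(Real.arccos x) ^ 2 / (4 * t))

namespace S10

open Nat
open scoped ContDiff


def sc : ℕ → ℝ := fun n => (-1) ^ n / (2 * n + 1)!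
def cc : ℕ → ℝ := fun n => (-1) ^ n / (2 * n)!

lemma norm_le {c : ℕ → ℝ} {m : ℕ → ℕ} (hm : ∀ n, n ≤ m n)
    (hc : ∀ n, c n = (-1) ^ n / (m n)!) (n : ℕ) : ‖c n‖ ≤ 1 / n ! := by
  have h1 : (0:ℝ) < n ! := by positivity
  have h2 : (n ! : ℝ) ≤ ((m n)! : ℝ) := Nat.cast_le.mpr (Nat.factorial_le (hm n))
  rw [hc n]
  rw [norm_div, norm_pow, norm_neg, norm_one, one_pow, Real.norm_eq_abs,
    abs_of_nonneg (by positivity)]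
  exact one_div_le_one_div_of_le h1 h2

lemma radius_top {c : ℕ → ℝ} (hc : ∀ n, ‖c n‖ ≤ 1 / n !) :
    (FormalMultilinearSeries.ofScalars ℝ c).radius = ⊤ := by
  apply FormalMultilinearSeries.radius_eq_top_of_summable_norm
  intro r
  refine Summable.of_nonneg_of_le (fun n => by positivity) (fun n => ?_)
    (Real.summable_pow_div_factorial r)
  calc ‖FormalMultilinearSeries.ofScalars ℝ c n‖ * (r:ℝ) ^ n
      ≤ (1 / n !) * (r:ℝ) ^ n := by
        apply mul_le_mul_of_nonneg_right _ (pow_nonneg r.coe_nonneg n)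
        rw [FormalMultilinearSeries.ofScalars_norm]
        exact hc n
    _ = (r:ℝ) ^ n / n ! := by ring

def Sf : ℝ → ℝ := (FormalMultilinearSeries.ofScalars ℝ sc).sum
def Cf : ℝ → ℝ := (FormalMultilinearSeries.ofScalars ℝ cc).sum

lemma sc_radius : (FormalMultilinearSeries.ofScalars ℝ sc).radius = ⊤ :=
  radius_top (norm_le (fun n => by omega) (fun n => rfl))
lemma cc_radius : (FormalMultilinearSeries.ofScalars ℝ cc).radius = ⊤ :=
  radius_top (norm_le (fun n => by omega) (fun n => rfl))

lemma hSf : HasFPowerSeriesOnBall Sf (FormalMultilinearSeries.ofScalars ℝ sc) 0 ⊤ := by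
  have := (FormalMultilinearSeries.ofScalars ℝ sc).hasFPowerSeriesOnBall
    (by rw [sc_radius]; exact ENNReal.zero_lt_top )
  rwa [sc_radius] at this


lemma sc_def (n : ℕ) : sc n = (-1) ^ n / (2 * n + 1)! := rfl
lemma cc_def (n : ℕ) : cc n = (-1) ^ n / (2 * n)! := rfl

lemma hCf : HasFPowerSeriesOnBall Cf (FormalMultilinearSeries.ofScalars ℝ cc) 0 ⊤ := by
  have := (FormalMultilinearSeries.ofScalars ℝ cc).hasFPowerSeriesOnBall
    (by rw [cc_radius]; exact ENNReal.zero_lt_top)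
  rwa [cc_radius] at this

lemma Sf_hasSum (u : ℝ) : HasSum (fun n => sc n * u ^ n) (Sf u) := by
  have h := hSf.hasSum (y := u) (by simp [EMetric.mem_ball, edist_lt_top])
  have h3 : (fun n => (FormalMultilinearSeries.ofScalars ℝ sc) n fun _ => u)
      = fun n => sc n * u ^ n := by
    funext n
    rw [FormalMultilinearSeries.ofScalars_apply_eq, smul_eq_mul]
  rw [h3, zero_add] at h
  exact h

lemma Cf_hasSum (u : ℝ) : HasSum (fun n => cc n * u ^ n) (Cf u) := by
  have h := hCf.hasSum (y := u) (by simp [EMetric.mem_ball, edist_lt_top])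
  have h3 : (fun n => (FormalMultilinearSeries.ofScalars ℝ cc) n fun _ => u)
      = fun n => cc n * u ^ n := by
    funext n
    rw [FormalMultilinearSeries.ofScalars_apply_eq, smul_eq_mul]
  rw [h3, zero_add] at h
  exact h

lemma Sf_analytic (x : ℝ) : AnalyticAt ℝ Sf x :=
  hSf.analyticAt_of_mem (by simp [EMetric.mem_ball, edist_lt_top])
lemma Cf_analytic (x : ℝ) : AnalyticAt ℝ Cf x :=
  hCf.analyticAt_of_mem (by simp [EMetric.mem_ball, edist_lt_top])

lemma Sf_spec (θ : ℝ) : θ * Sf (θ ^ 2) = Real.sin θ := by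
  have h1 := (Sf_hasSum (θ ^ 2)).mul_left θ
  have h2 : (fun n => θ * (sc n * (θ ^ 2) ^ n))
      = fun n : ℕ => (-1) ^ n * θ ^ (2 * n + 1) / (2 * n + 1)! := by
    funext n
    rw [sc_def, ← pow_mul]
    ring
  rw [h2] at h1
  exact h1.unique (Real.hasSum_sin θ)

lemma Cf_spec (θ : ℝ) : Cf (θ ^ 2) = Real.cos θ := by
  have h1 := Cf_hasSum (θ ^ 2)
  have h2 : (fun n => cc n * (θ ^ 2) ^ n)
      = fun n : ℕ => (-1) ^ n * θ ^ (2 * n) / (2 * n)! := by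
    funext n
    rw [cc_def, ← pow_mul]
    ring
  rw [h2] at h1
  exact h1.unique (Real.hasSum_cos θ)

lemma Sf_zero : Sf 0 = 1 := by
  have h1 := Sf_hasSum 0
  have h2 : HasSum (fun n => sc n * (0:ℝ) ^ n) (sc 0 * (0:ℝ) ^ 0) :=
    hasSum_single 0 (fun b hb => by simp [zero_pow hb])
  have := h1.unique h2
  simpa [sc_def] using this

lemma Cf_zero : Cf 0 = 1 := by
  have h1 := Cf_hasSum 0
  have h2 : HasSum (fun n => cc n * (0:ℝ) ^ n) (cc 0 * (0:ℝ) ^ 0) :=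
    hasSum_single 0 (fun b hb => by simp [zero_pow hb])
  have := h1.unique h2
  simpa [cc_def] using this

lemma Cf_hasDerivAt : HasDerivAt Cf (-(1/2)) 0 := by
  have h1 : HasDerivAt Cf (deriv Cf 0) 0 :=
    ((Cf_analytic 0).differentiableAt).hasDerivAt
  have h2 : deriv Cf 0 = -(1/2) := by
    rw [hCf.hasFPowerSeriesAt.deriv]
    show (FormalMultilinearSeries.ofScalars ℝ cc) 1 (fun _ => (1:ℝ)) = -(1/2)
    rw [FormalMultilinearSeries.ofScalars_apply_eq, cc_def]
    norm_num [Nat.factorial]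
  rwa [h2] at h1


lemma analytic_local_inverse {f : ℝ → ℝ} {a d : ℝ} (hf : ∀ y : ℝ, AnalyticAt ℝ f y)
    (hd : HasDerivAt f d a) (hd0 : d ≠ 0) :
    ∃ ψ : ℝ → ℝ, AnalyticAt ℝ ψ (f a) ∧ ψ (f a) = a ∧ (∀ᶠ x in 𝓝 a, ψ (f x) = x) := by
  have hω : ContDiffAt ℝ ω f a := (hf a).contDiffAt
  have hs : HasStrictDerivAt f d a := hω.hasStrictDerivAt' hd (by simp)
  have hF := hs.hasStrictFDerivAt_equiv hd0
  set P := hF.toOpenPartialHomeomorph f with hPdef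
  refine ⟨P.symm, ?_, ?_, ?_⟩
  · have h1 : P.symm (f a) = a := by
      have := hF.localInverse_apply_image
      rwa [hF.localInverse_def] at this
    have h2 : ContDiffAt ℝ ω P.symm (f a) := by
      apply P.contDiffAt_symm_deriv hd0 (hF.image_mem_toOpenPartialHomeomorph_target)
      · rw [h1]; exact hd
      · rw [h1]; exact hω
    exact h2.analyticAt
  · have := hF.localInverse_apply_image
    rwa [hF.localInverse_def] at this
  · have := hF.eventually_left_inverse
    rwa [hF.localInverse_def] at this

lemma cos_analytic (x : ℝ) : AnalyticAt ℝ Real.cos x := by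
  have h : Real.cos = fun θ => Cf (θ ^ 2) := funext fun θ => (Cf_spec θ).symm
  rw [h]
  exact (Cf_analytic _).comp (analyticAt_id.pow 2)

lemma analyticAt_arccos {x : ℝ} (hx : x ∈ Set.Ioo (-1:ℝ) 1) : AnalyticAt ℝ Real.arccos x := by
  have hsin : Real.sin (Real.arccos x) ≠ 0 := by
    rw [Real.sin_arccos]
    have h2 : x ^ 2 < 1 := by nlinarith [hx.1, hx.2]
    exact ne_of_gt (Real.sqrt_pos.mpr (by linarith))
  obtain ⟨ψ, hψa, hψaa, hleft⟩ := analytic_local_inverse (a := Real.arccos x)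
    (fun y => cos_analytic y) (Real.hasDerivAt_cos (Real.arccos x)) (by simpa using hsin)
  have hcos : Real.cos (Real.arccos x) = x :=
    Real.cos_arccos (by linarith [hx.1]) (by linarith [hx.2])
  rw [hcos] at hψa
  refine hψa.congr ?_
  have hcont : Tendsto Real.arccos (𝓝 x) (𝓝 (Real.arccos x)) :=
    Real.continuous_arccos.continuousAt
  filter_upwards [hcont.eventually hleft, isOpen_Ioo.mem_nhds hx] with y hy1 hy2
  rw [Real.cos_arccos (by linarith [hy2.1]) (by linarith [hy2.2])] at hy1
  exact hy1

lemma psi_exists : ∃ ψ : ℝ → ℝ, (∀ᶠ y in 𝓝 (0:ℝ), AnalyticAt ℝ ψ y) ∧ ψ 0 = 0 ∧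
    ∀ᶠ u in 𝓝 (0:ℝ), ψ (1 - Cf u) = u := by
  have hd : HasDerivAt (fun u => 1 - Cf u) (1/2 : ℝ) 0 := by
    have := (hasDerivAt_const (0:ℝ) (1:ℝ)).sub Cf_hasDerivAt
    norm_num at this
    exact this
  obtain ⟨ψ, h1, h2, h3⟩ := analytic_local_inverse (f := fun u => 1 - Cf u) (a := 0) (d := 1/2)
    (fun y => analyticAt_const.sub (Cf_analytic y)) hd (by norm_num)
  have h0 : (1:ℝ) - Cf 0 = 0 := by rw [Cf_zero]; ring
  rw [h0] at h1 h2
  exact ⟨ψ, h1.eventually_analyticAt, h2, h3⟩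



lemma key_rep (U : Set ℝ) (hU : IsOpen U) (g h : ℝ → ℝ)
    (hg : ∀ x ∈ U, AnalyticAt ℝ g x) (hh : ∀ x ∈ U, AnalyticAt ℝ h x) (n : ℕ) :
    ∃ p : ℕ → ℝ → ℝ, (∀ k, ∀ x ∈ U, AnalyticAt ℝ (p k) x) ∧
      (∀ k, n < k → p k = fun _ => 0) ∧
      ∀ t : ℝ, 0 < t → ∀ x ∈ U,
        iteratedDeriv n (fun y => g y * Real.exp (-h y / (4 * t))) x
          = (∑ k ∈ Finset.range (n + 1), p k x / t ^ k) * Real.exp (-h x / (4 * t)) := by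
  induction n with
  | zero =>
    refine ⟨fun k => if k = 0 then g else fun _ => 0, ?_, ?_, ?_⟩
    · intro k x hx
      by_cases hk : k = 0
      · simpa [hk] using hg x hx
      · simpa [hk] using (analyticAt_const (v := (0:ℝ)))
    · intro k hk
      have : k ≠ 0 := by omega
      simp [this]
    · intro t ht x hx
      simp [iteratedDeriv_zero]
  | succ n IH =>
    obtain ⟨p, hp, hpz, hrep⟩ := IH
    refine ⟨fun k x => deriv (p k) x - (if k = 0 then 0 else p (k - 1) x * deriv h x / 4),
      ?_, ?_, ?_⟩
    · intro k x hx
      have hpOn : AnalyticOnNhd ℝ (p k) U := hp k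
      have hhOn : AnalyticOnNhd ℝ h U := hh
      have hd : AnalyticAt ℝ (deriv (p k)) x := hpOn.deriv x hx
      have hdh : AnalyticAt ℝ (deriv h) x := hhOn.deriv x hx
      by_cases hk : k = 0
      · subst hk
        simp only [if_pos, sub_zero]
        exact hd
      · simp only [if_neg hk]
        exact hd.sub (((hp (k-1) x hx).mul hdh).div analyticAt_const (by norm_num))
    · intro k hk
      have hk0 : k ≠ 0 := by omega
      have h1 : p k = fun _ => 0 := hpz k (by omega)
      have h2 : p (k - 1) = fun _ => 0 := hpz (k - 1) (by omega)
      funext x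
      simp [hk0, h1, h2]
    · intro t ht x hx
      have htne : t ≠ 0 := ne_of_gt ht
      rw [iteratedDeriv_succ]
      have heq : iteratedDeriv n (fun y => g y * Real.exp (-h y / (4 * t)))
          =ᶠ[𝓝 x] fun y =>
            (∑ k ∈ Finset.range (n + 1), p k y / t ^ k) * Real.exp (-h y / (4 * t)) := by
        filter_upwards [hU.mem_nhds hx] with y hy using hrep t ht y hy
      rw [heq.deriv_eq]
      have hd1 : HasDerivAt (fun y => ∑ k ∈ Finset.range (n + 1), p k y / t ^ k)
          (∑ k ∈ Finset.range (n + 1), deriv (p k) x / t ^ k) x :=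
        HasDerivAt.fun_sum fun k _ => ((hp k x hx).differentiableAt.hasDerivAt).div_const _
      have hd2 : HasDerivAt (fun y => Real.exp (-h y / (4 * t)))
          (Real.exp (-h x / (4 * t)) * (-deriv h x / (4 * t))) x :=
        ((((hh x hx).differentiableAt.hasDerivAt).neg).div_const _).exp
      rw [(hd1.fun_mul hd2).deriv]
      have e1 : ∀ k ∈ Finset.range (n+2),
          (deriv (p k) x - (if k = 0 then 0 else p (k - 1) x * deriv h x / 4)) / t ^ k
          = deriv (p k) x / t ^ k
            - (if k = 0 then 0 else p (k - 1) x * deriv h x / 4) / t ^ k :=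
        fun k _ => sub_div _ _ _
      have eA : ∑ k ∈ Finset.range (n + 2), deriv (p k) x / t ^ k
          = ∑ k ∈ Finset.range (n + 1), deriv (p k) x / t ^ k := by
        rw [Finset.sum_range_succ, hpz (n + 1) (lt_add_one n)]
        simp
      have e2 : ∑ k ∈ Finset.range (n + 2),
          (if k = 0 then 0 else p (k - 1) x * deriv h x / 4) / t ^ k
          = ∑ k ∈ Finset.range (n + 1), (p k x * deriv h x / 4) / t ^ (k + 1) := by
        rw [Finset.sum_range_succ']
        simp
      have e3 : ∑ k ∈ Finset.range (n + 1), (p k x * deriv h x / 4) / t ^ (k + 1)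
          = (∑ k ∈ Finset.range (n + 1), p k x / t ^ k) * (deriv h x / (4 * t)) := by
        rw [Finset.sum_mul]
        refine Finset.sum_congr rfl fun k _ => ?_
        rw [pow_succ]
        ring
      have hsplit : ∑ k ∈ Finset.range (n + 2),
          (deriv (p k) x - (if k = 0 then 0 else p (k - 1) x * deriv h x / 4)) / t ^ k
          = (∑ k ∈ Finset.range (n + 1), deriv (p k) x / t ^ k)
            + (∑ k ∈ Finset.range (n + 1), p k x / t ^ k) * (-deriv h x / (4 * t)) := by
        rw [Finset.sum_congr rfl e1, Finset.sum_sub_distrib, eA, e2, e3]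
        ring
      rw [hsplit]
      ring

lemma key_bound (U K : Set ℝ) (hU : IsOpen U) (hK : IsCompact K) (hKU : K ⊆ U)
    (g h : ℝ → ℝ) (hg : ∀ x ∈ U, AnalyticAt ℝ g x) (hh : ∀ x ∈ U, AnalyticAt ℝ h x) (n : ℕ) :
    ∃ C : ℝ, ∀ t ∈ Set.Ioo (0:ℝ) 1, ∀ x ∈ K, 0 ≤ h x →
      |iteratedDeriv n (fun y => g y * Real.exp (-h y / (4 * t))) x| ≤ C / t ^ n := by
  obtain ⟨p, hp, -, hrep⟩ := key_rep U hU g h hg hh n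
  have hMex : ∀ k : ℕ, ∃ M : ℝ, 0 ≤ M ∧ ∀ x ∈ K, |p k x| ≤ M := by
    intro k
    obtain ⟨M, hM⟩ := hK.exists_bound_of_continuousOn
      (fun x hx => ((hp k x (hKU hx)).continuousAt).continuousWithinAt)
    exact ⟨max M 0, le_max_right _ _, fun x hx => (hM x hx).trans (le_max_left _ _)⟩
  choose M hM0 hMb using hMex
  refine ⟨∑ k ∈ Finset.range (n + 1), M k, ?_⟩
  intro t ht x hx hhx
  rw [hrep t ht.1 x (hKU hx), abs_mul]
  have hE : |Real.exp (-h x / (4 * t))| ≤ 1 := by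
    rw [abs_of_pos (Real.exp_pos _)]
    refine Real.exp_le_one_iff.mpr (div_nonpos_of_nonpos_of_nonneg (neg_nonpos.mpr hhx) (by linarith [ht.1]))
  calc |∑ k ∈ Finset.range (n + 1), p k x / t ^ k| * |Real.exp (-h x / (4 * t))|
      ≤ |∑ k ∈ Finset.range (n + 1), p k x / t ^ k| * 1 :=
        mul_le_mul_of_nonneg_left hE (abs_nonneg _)
    _ = |∑ k ∈ Finset.range (n + 1), p k x / t ^ k| := mul_one _
    _ ≤ ∑ k ∈ Finset.range (n + 1), |p k x / t ^ k| := Finset.abs_sum_le_sum_abs _ _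
    _ ≤ ∑ k ∈ Finset.range (n + 1), M k / t ^ n := by
        refine Finset.sum_le_sum fun k hk => ?_
        rw [abs_div, abs_pow, abs_of_pos ht.1]
        refine div_le_div₀ (hM0 k) (hMb k x hx) (pow_pos ht.1 n) ?_
        exact pow_le_pow_of_le_one ht.1.le ht.2.le (Nat.lt_succ_iff.mp (Finset.mem_range.mp hk))
    _ = (∑ k ∈ Finset.range (n + 1), M k) / t ^ n := (Finset.sum_div _ _ _).symm


lemma Sf_arccos_pos {y : ℝ} (hy : y ∈ Set.Ioo (-1:ℝ) 1) : 0 < Sf ((Real.arccos y) ^ 2) := by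
  have hθ : 0 < Real.arccos y := Real.arccos_pos.2 hy.2
  have hs : (0:ℝ) < Real.sqrt (1 - y ^ 2) :=
    Real.sqrt_pos.mpr (by nlinarith [hy.1, hy.2])
  have hmul : Real.arccos y * Sf ((Real.arccos y) ^ 2) = Real.sqrt (1 - y ^ 2) := by
    rw [Sf_spec, Real.sin_arccos]
  nlinarith [hmul, hθ, hs]

lemma Q1_eq (t : ℝ) {y : ℝ} (hy : y ∈ Set.Ioo (-1:ℝ) 1) :
    Q1 t y = (1 / Sf ((Real.arccos y) ^ 2)) * Real.exp (-(Real.arccos y) ^ 2 / (4 * t)) := by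
  have hθ : 0 < Real.arccos y := Real.arccos_pos.2 hy.2
  have hs : (0:ℝ) < Real.sqrt (1 - y ^ 2) :=
    Real.sqrt_pos.mpr (by nlinarith [hy.1, hy.2])
  have hSf := Sf_arccos_pos hy
  have hmul : Real.arccos y * Sf ((Real.arccos y) ^ 2) = Real.sqrt (1 - y ^ 2) := by
    rw [Sf_spec, Real.sin_arccos]
  rw [Q1]
  congr 1
  rw [div_eq_div_iff hs.ne' hSf.ne']
  linarith [hmul]


end S10

open S10 in
/-- Lemma `l.Q1`: for each `n ≥ 0` there is `Cₙ < ∞` with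
`|∂ⁿ/∂xⁿ Q₁(t,x)| ≤ Cₙ/tⁿ` for all `x ∈ [0,1)` and `t ∈ (0,1)`. -/
theorem statement10 (n : ℕ) :
    ∃ C : ℝ, ∀ x ∈ Set.Ico (0 : ℝ) 1, ∀ t ∈ Set.Ioo (0 : ℝ) 1,
      |iteratedDeriv n (fun x : ℝ => Q1 t x) x| ≤ C / t ^ n := by
  obtain ⟨ψ, hψan, hψ0, hψleft⟩ := psi_exists
  have tend1 : Tendsto (fun y : ℝ => 1 - y) (𝓝 1) (𝓝 0) := by
    have := ((continuous_const (y := (1:ℝ))).sub continuous_id).tendsto (1:ℝ)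
    simpa [Pi.sub_def] using this
  have ev1 : ∀ᶠ y in 𝓝 (1:ℝ), AnalyticAt ℝ ψ (1 - y) := tend1.eventually hψan
  have tendA : Tendsto (fun y : ℝ => (Real.arccos y) ^ 2) (𝓝 1) (𝓝 0) := by
    have hc : ContinuousAt (fun y : ℝ => (Real.arccos y) ^ 2) 1 :=
      (Real.continuous_arccos.pow 2).continuousAt
    simpa [ContinuousAt, Real.arccos_one] using hc
  have ev2 : ∀ᶠ y in 𝓝 (1:ℝ), ψ (1 - Cf ((Real.arccos y) ^ 2)) = (Real.arccos y) ^ 2 :=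
    tendA.eventually hψleft
  have tendS : Tendsto (fun y : ℝ => Sf (ψ (1 - y))) (𝓝 1) (𝓝 1) := by
    have hcψ : ContinuousAt ψ 0 := hψan.self_of_nhds.continuousAt
    have hcS : ContinuousAt Sf (ψ 0) := (Sf_analytic _).continuousAt
    have h1 := (hcS.comp hcψ).tendsto.comp tend1
    simp only [Function.comp_def, Function.comp_apply, hψ0, Sf_zero] at h1
    exact h1
  have ev3 : ∀ᶠ y in 𝓝 (1:ℝ), Sf (ψ (1 - y)) ≠ 0 := tendS.eventually_ne one_ne_zero
  obtain ⟨δ₀, hδ₀pos, hδ₀⟩ := Metric.eventually_nhds_iff.mp ((ev1.and ev2).and ev3)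
  set δ := min δ₀ 1 with hδdef
  have hδpos : 0 < δ := lt_min hδ₀pos one_pos
  have hδ1 : δ ≤ 1 := min_le_right _ _
  have hδδ₀ : δ ≤ δ₀ := min_le_left _ _
  have hfacts : ∀ y : ℝ, |y - 1| < δ → AnalyticAt ℝ ψ (1 - y) ∧ Sf (ψ (1 - y)) ≠ 0 := by
    intro y hy
    have hd : dist y 1 < δ₀ := by rw [Real.dist_eq]; linarith
    exact ⟨(hδ₀ hd).1.1, (hδ₀ hd).2⟩
  have hid : ∀ y : ℝ, |y - 1| < δ → -1 < y → y ≤ 1 → ψ (1 - y) = (Real.arccos y) ^ 2 := by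
    intro y h1 h2 h3
    have hd : dist y 1 < δ₀ := by rw [Real.dist_eq]; linarith
    have e := (hδ₀ hd).1.2
    rwa [Cf_spec, Real.cos_arccos (by linarith) h3] at e
  -- region 1
  have hU1 : IsOpen (Set.Ioo (-1:ℝ) 1) := isOpen_Ioo
  have hh1 : ∀ x ∈ Set.Ioo (-1:ℝ) 1, AnalyticAt ℝ (fun y => (Real.arccos y) ^ 2) x :=
    fun x hx => (analyticAt_arccos hx).pow 2
  have hg1 : ∀ x ∈ Set.Ioo (-1:ℝ) 1, AnalyticAt ℝ (fun y => 1 / Sf ((Real.arccos y) ^ 2)) x :=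
    fun x hx => analyticAt_const.div ((Sf_analytic _).comp (hh1 x hx))
      (ne_of_gt (Sf_arccos_pos hx))
  obtain ⟨C₁, hC₁⟩ := key_bound (Set.Ioo (-1:ℝ) 1) (Set.Icc 0 (1 - δ/2)) hU1 isCompact_Icc
    (fun x hx => ⟨by simp at hx; linarith [hx.1], by simp at hx; linarith [hx.2]⟩) _ _ hg1 hh1 n
  -- region 2
  have hU2 : IsOpen (Set.Ioo (1 - δ) (1 + δ)) := isOpen_Ioo
  have hmem2 : ∀ y ∈ Set.Ioo (1 - δ) (1 + δ), |y - 1| < δ := by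
    intro y hy
    rw [abs_sub_lt_iff]
    constructor <;> [linarith [hy.2]; linarith [hy.1]]
  have hh2 : ∀ x ∈ Set.Ioo (1 - δ) (1 + δ), AnalyticAt ℝ (fun y => ψ (1 - y)) x := fun x hx =>
    ((hfacts x (hmem2 x hx)).1).comp (analyticAt_const.sub analyticAt_id)
  have hg2 : ∀ x ∈ Set.Ioo (1 - δ) (1 + δ), AnalyticAt ℝ (fun y => 1 / Sf (ψ (1 - y))) x :=
    fun x hx => analyticAt_const.div ((Sf_analytic _).comp (hh2 x hx))
      ((hfacts x (hmem2 x hx)).2)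
  obtain ⟨C₂, hC₂⟩ := key_bound (Set.Ioo (1 - δ) (1 + δ)) (Set.Icc (1 - δ/2) 1) hU2
    isCompact_Icc
    (fun x hx => ⟨by simp at hx; linarith [hx.1], by simp at hx; linarith [hx.2]⟩) _ _ hg2 hh2 n
  refine ⟨max C₁ C₂, ?_⟩
  intro x hx t ht
  rcases le_or_gt x (1 - δ/2) with hcase | hcase
  · have hxU1 : x ∈ Set.Ioo (-1:ℝ) 1 := ⟨by linarith [hx.1], hx.2⟩
    have heq : (fun x : ℝ => Q1 t x) =ᶠ[𝓝 x]
        fun y => (1 / Sf ((Real.arccos y) ^ 2)) * Real.exp (-((Real.arccos y) ^ 2) / (4 * t)) := by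
      filter_upwards [hU1.mem_nhds hxU1] with y hy using Q1_eq t hy
    rw [Filter.EventuallyEq.iteratedDeriv_eq n heq]
    calc |iteratedDeriv n
            (fun y => (1 / Sf ((Real.arccos y) ^ 2)) *
              Real.exp (-((Real.arccos y) ^ 2) / (4 * t))) x|
        ≤ C₁ / t ^ n := hC₁ t ht x ⟨hx.1, hcase⟩ (by positivity)
      _ ≤ max C₁ C₂ / t ^ n := by
          exact div_le_div_of_nonneg_right (le_max_left C₁ C₂) (pow_pos ht.1 n).le
  · have hxd : |x - 1| < δ := by
      rw [abs_sub_lt_iff]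
      constructor <;> [linarith [hx.2]; linarith [hcase]]
    have heq : (fun x : ℝ => Q1 t x) =ᶠ[𝓝 x]
        fun y => (1 / Sf (ψ (1 - y))) * Real.exp (-(ψ (1 - y)) / (4 * t)) := by
      have hxO : x ∈ Set.Ioo (1 - δ) (1:ℝ) := ⟨by linarith, hx.2⟩
      filter_upwards [isOpen_Ioo.mem_nhds hxO] with y hy
      have hyd : |y - 1| < δ := by
        rw [abs_sub_lt_iff]
        constructor <;> [linarith [hy.2]; linarith [hy.1]]
      have hyI : y ∈ Set.Ioo (-1:ℝ) 1 := ⟨by linarith [hy.1], hy.2⟩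
      rw [Q1_eq t hyI, hid y hyd (by linarith [hyI.1]) hy.2.le]
    rw [Filter.EventuallyEq.iteratedDeriv_eq n heq]
    have h0x : 0 ≤ ψ (1 - x) := by
      rw [hid x hxd (by linarith [hx.1]) hx.2.le]
      positivity
    calc |iteratedDeriv n
            (fun y => (1 / Sf (ψ (1 - y))) * Real.exp (-(ψ (1 - y)) / (4 * t))) x|
        ≤ C₂ / t ^ n := hC₂ t ht x ⟨hcase.le, hx.2.le⟩ h0x
      _ ≤ max C₁ C₂ / t ^ n := by
          exact div_le_div_of_nonneg_right (le_max_right C₁ C₂) (pow_pos ht.1 n).le
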